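/- Let E be a finite set partitioned into disjoint nonempty blocks E = E_1 ∪ … ∪ E_k, and let p_u ∈ [0,1] for each u ∈ E satisfy Σ_{u ∈ E_ℓ} p_u = 1 for every ℓ ∈ {1,…,k}. Let π be the distribution on subsets of E that, independently for each block ℓ, includes exactly one element of E_ℓ chosen with probabilities (p_u)_{u ∈ E_ℓ}, and let π̂ be the distribution that includes each element u ∈ E independently with probability p_u. Then for every nonnegative monotone submodular function f : 2^E → ℝ≥0 it holds that E_{X∼π}[f(X)] ≥ E_{X∼π̂}[f(X)]. -/

import Mathlib

open Finset

/-- A set function is monotone if it is nondecreasing with respect to inclusion. -/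
def MonotoneFn {α : Type*} (f : Finset α → ℝ) : Prop :=
  ∀ ⦃X Y : Finset α⦄, X ⊆ Y → f X ≤ f Y

/-- A set function is submodular if marginal gains diminish as the set grows. -/
def SubmodularFn {α : Type*} [DecidableEq α] (f : Finset α → ℝ) : Prop :=
  ∀ ⦃X Y : Finset α⦄, X ⊆ Y → ∀ u, u ∉ Y → f (insert u Y) - f Y ≤ f (insert u X) - f X

section Aux

variable {E : Type*} [DecidableEq E]

/-- Submodular functions are subadditive relative to the empty set. -/
lemma submod_subadd {f : Finset E → ℝ} (hsub : SubmodularFn f) (T : Finset E) :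
    f T ≤ f ∅ + ∑ u ∈ T, (f {u} - f ∅) := by
  induction T using Finset.induction_on with
  | empty => simp
  | @insert a T ha ih =>
    have h := hsub (empty_subset T) a ha
    rw [Finset.sum_insert ha]
    simp only [Finset.insert_empty] at h
    linarith

/-- Expectation of an affine functional under independent sampling. -/
lemma sum_w_affine (p : E → ℝ) (b : E → ℝ) (S : Finset E) (a : ℝ) :
    ∑ T ∈ S.powerset, ((∏ u ∈ T, p u) * ∏ u ∈ S \ T, (1 - p u)) * (a + ∑ u ∈ T, b u)
      = a + ∑ u ∈ S, p u * b u := by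
  induction S using Finset.induction_on generalizing a with
  | empty => simp
  | @insert x S hx ih =>
    rw [Finset.sum_powerset_insert hx]
    have h1 : ∀ T ∈ S.powerset,
        ((∏ u ∈ T, p u) * ∏ u ∈ insert x S \ T, (1 - p u)) * (a + ∑ u ∈ T, b u)
          = (1 - p x) * (((∏ u ∈ T, p u) * ∏ u ∈ S \ T, (1 - p u)) * (a + ∑ u ∈ T, b u)) := by
      intro T hT
      have hTS := mem_powerset.1 hT
      have hxT : x ∉ T := fun h => hx (hTS h)
      have hxST : x ∉ S \ T := fun h => hx (mem_sdiff.1 h).1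
      rw [insert_sdiff_of_notMem _ hxT, prod_insert hxST]
      ring
    have h2 : ∀ T ∈ S.powerset,
        ((∏ u ∈ insert x T, p u) * ∏ u ∈ insert x S \ insert x T, (1 - p u))
            * (a + ∑ u ∈ insert x T, b u)
          = p x * (((∏ u ∈ T, p u) * ∏ u ∈ S \ T, (1 - p u)) * ((a + b x) + ∑ u ∈ T, b u)) := by
      intro T hT
      have hTS := mem_powerset.1 hT
      have hxT : x ∉ T := fun h => hx (hTS h)
      rw [insert_sdiff_insert, sdiff_insert_of_notMem hx, prod_insert hxT,
        Finset.sum_insert hxT]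
      ring
    rw [Finset.sum_congr rfl h1, Finset.sum_congr rfl h2, ← Finset.mul_sum, ← Finset.mul_sum,
      ih a, ih (a + b x), Finset.sum_insert hx]
    ring

/-- The single-block inequality. -/
lemma single_block (p : E → ℝ) (hp0 : ∀ u, 0 ≤ p u) (hp1 : ∀ u, p u ≤ 1)
    (S : Finset E) (hS : ∑ u ∈ S, p u = 1)
    (g : Finset E → ℝ) (hsub : SubmodularFn g) :
    ∑ T ∈ S.powerset, ((∏ u ∈ T, p u) * ∏ u ∈ S \ T, (1 - p u)) * g T
      ≤ ∑ u ∈ S, p u * g {u} := by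
  have hw : ∀ T : Finset E, 0 ≤ (∏ u ∈ T, p u) * ∏ u ∈ S \ T, (1 - p u) := fun T =>
    mul_nonneg (prod_nonneg fun u _ => hp0 u)
      (prod_nonneg fun u _ => by linarith [hp1 u])
  calc ∑ T ∈ S.powerset, ((∏ u ∈ T, p u) * ∏ u ∈ S \ T, (1 - p u)) * g T
      ≤ ∑ T ∈ S.powerset, ((∏ u ∈ T, p u) * ∏ u ∈ S \ T, (1 - p u))
          * (g ∅ + ∑ u ∈ T, (g {u} - g ∅)) :=
        Finset.sum_le_sum fun T _ =>
          mul_le_mul_of_nonneg_left (submod_subadd hsub T) (hw T)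
    _ = g ∅ + ∑ u ∈ S, p u * (g {u} - g ∅) := sum_w_affine p _ S _
    _ = ∑ u ∈ S, p u * g {u} := by
        have h : ∑ u ∈ S, p u * (g {u} - g ∅)
            = (∑ u ∈ S, p u * g {u}) - (∑ u ∈ S, p u) * g ∅ := by
          simp only [mul_sub, Finset.sum_sub_distrib, Finset.sum_mul]
        rw [h, hS]
        ring

/-- Sum over the powerset of a disjoint union. -/
lemma sum_powerset_union_disjoint {A D : Finset E} (h : Disjoint A D) (F : Finset E → ℝ) :
    ∑ X ∈ (A ∪ D).powerset, F X
      = ∑ T ∈ A.powerset, ∑ X ∈ D.powerset, F (T ∪ X) := by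
  rw [← Finset.sum_product']
  refine Finset.sum_nbij' (fun X => (X ∩ A, X ∩ D)) (fun q => q.1 ∪ q.2) ?_ ?_ ?_ ?_ ?_
  · intro X _
    simp only [mem_product, mem_powerset]
    exact ⟨inter_subset_right, inter_subset_right⟩
  · intro q hq
    simp only [mem_product, mem_powerset] at hq
    exact mem_powerset.2 (union_subset_union hq.1 hq.2)
  · intro X hX
    show X ∩ A ∪ X ∩ D = X
    rw [← inter_union_distrib_left, inter_eq_left.2 (mem_powerset.1 hX)]
  · intro q hq
    simp only [mem_product, mem_powerset] at hq
    have e2 : q.2 ∩ A = ∅ := by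
      rw [Finset.inter_comm]
      exact Finset.disjoint_iff_inter_eq_empty.1 (h.mono_right hq.2)
    have e1 : q.1 ∩ D = ∅ := Finset.disjoint_iff_inter_eq_empty.1 (h.mono_left hq.1)
    have hA : (q.1 ∪ q.2) ∩ A = q.1 := by
      rw [union_inter_distrib_right, inter_eq_left.2 hq.1, e2, union_empty]
    have hD : (q.1 ∪ q.2) ∩ D = q.2 := by
      rw [union_inter_distrib_right, e1, inter_eq_left.2 hq.2, empty_union]
    show ((q.1 ∪ q.2) ∩ A, (q.1 ∪ q.2) ∩ D) = q
    rw [hA, hD]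
  · intro X hX
    show F X = F (X ∩ A ∪ X ∩ D)
    rw [← inter_union_distrib_left, inter_eq_left.2 (mem_powerset.1 hX)]

end Aux

section Main

variable {E ι : Type*} [Fintype E] [DecidableEq E] [Fintype ι] [DecidableEq ι]

/-- Marginalizing out the coordinate `ℓ0`. -/
lemma marg_coord (B : ι → Finset E) (p : E → ℝ) (hpsum : ∀ ℓ, ∑ u ∈ B ℓ, p u = 1)
    (ℓ0 : ι) (s : Finset ι) (hs : ℓ0 ∉ s) (H : E → Finset E → ℝ) :
    ∑ u ∈ B ℓ0, p u * ∑ c ∈ Fintype.piFinset B, (∏ ℓ, p (c ℓ)) * H u (s.image c)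
      = ∑ c ∈ Fintype.piFinset B, (∏ ℓ, p (c ℓ)) * H (c ℓ0) (s.image c) := by
  have himg : ∀ (c : ι → E) (v : E), s.image (Function.update c ℓ0 v) = s.image c := by
    intro c v
    refine Finset.image_congr fun ℓ hℓ => ?_
    exact Function.update_of_ne (ne_of_mem_of_not_mem hℓ hs) _ _
  have hmem : ∀ q : E × (ι → E), q ∈ B ℓ0 ×ˢ Fintype.piFinset B →
      (q.2 ℓ0, Function.update q.2 ℓ0 q.1) ∈ B ℓ0 ×ˢ Fintype.piFinset B := by
    intro q hq
    simp only [mem_product, Fintype.mem_piFinset] at hq ⊢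
    refine ⟨hq.2 ℓ0, fun ℓ => ?_⟩
    by_cases hℓ : ℓ = ℓ0
    · subst hℓ; rw [Function.update_self]; exact hq.1
    · rw [Function.update_of_ne hℓ]; exact hq.2 ℓ
  have hinv : ∀ q : E × (ι → E),
      ((Function.update q.2 ℓ0 q.1) ℓ0,
        Function.update (Function.update q.2 ℓ0 q.1) ℓ0 (q.2 ℓ0)) = q := by
    intro q
    have e1 : (Function.update q.2 ℓ0 q.1) ℓ0 = q.1 := Function.update_self ℓ0 q.1 q.2
    have e2 : Function.update (Function.update q.2 ℓ0 q.1) ℓ0 (q.2 ℓ0) = q.2 := by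
      rw [Function.update_idem, Function.update_eq_self]
    rw [e1, e2]
  have key : ∑ q ∈ B ℓ0 ×ˢ Fintype.piFinset B,
        p q.1 * ((∏ ℓ, p (q.2 ℓ)) * H q.1 (s.image q.2))
      = ∑ q ∈ B ℓ0 ×ˢ Fintype.piFinset B,
        p q.1 * ((∏ ℓ, p (q.2 ℓ)) * H (q.2 ℓ0) (s.image q.2)) := by
    refine Finset.sum_nbij' (fun q => (q.2 ℓ0, Function.update q.2 ℓ0 q.1))
      (fun q => (q.2 ℓ0, Function.update q.2 ℓ0 q.1)) hmem hmem
      (fun q _ => hinv q) (fun q _ => hinv q) ?_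
    intro q hq
    have hupd : ∏ ℓ, p (Function.update q.2 ℓ0 q.1 ℓ)
        = p q.1 * ∏ ℓ ∈ Finset.univ.erase ℓ0, p (q.2 ℓ) := by
      rw [← Finset.mul_prod_erase Finset.univ (fun ℓ => p (Function.update q.2 ℓ0 q.1 ℓ))
        (Finset.mem_univ ℓ0), Function.update_self]
      congr 1
      refine Finset.prod_congr rfl fun ℓ hℓ => ?_
      rw [Function.update_of_ne (Finset.ne_of_mem_erase hℓ)]
    have hfull : ∏ ℓ, p (q.2 ℓ)
        = p (q.2 ℓ0) * ∏ ℓ ∈ Finset.univ.erase ℓ0, p (q.2 ℓ) :=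
      (Finset.mul_prod_erase Finset.univ _ (Finset.mem_univ ℓ0)).symm
    simp only [Function.update_self, himg, hupd, hfull]
    ring
  calc ∑ u ∈ B ℓ0, p u * ∑ c ∈ Fintype.piFinset B, (∏ ℓ, p (c ℓ)) * H u (s.image c)
      = ∑ q ∈ B ℓ0 ×ˢ Fintype.piFinset B,
          p q.1 * ((∏ ℓ, p (q.2 ℓ)) * H q.1 (s.image q.2)) := by
        rw [Finset.sum_product]
        exact Finset.sum_congr rfl fun u _ => Finset.mul_sum _ _ _
    _ = ∑ q ∈ B ℓ0 ×ˢ Fintype.piFinset B,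
          p q.1 * ((∏ ℓ, p (q.2 ℓ)) * H (q.2 ℓ0) (s.image q.2)) := key
    _ = ∑ c ∈ Fintype.piFinset B, (∏ ℓ, p (c ℓ)) * H (c ℓ0) (s.image c) := by
        rw [Finset.sum_product]
        calc ∑ u ∈ B ℓ0, ∑ c ∈ Fintype.piFinset B,
              p u * ((∏ ℓ, p (c ℓ)) * H (c ℓ0) (s.image c))
            = ∑ u ∈ B ℓ0, p u * ∑ c ∈ Fintype.piFinset B,
                (∏ ℓ, p (c ℓ)) * H (c ℓ0) (s.image c) :=
              Finset.sum_congr rfl fun u _ => (Finset.mul_sum _ _ _).symm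
          _ = (∑ u ∈ B ℓ0, p u) * ∑ c ∈ Fintype.piFinset B,
                (∏ ℓ, p (c ℓ)) * H (c ℓ0) (s.image c) :=
              (Finset.sum_mul _ _ _).symm
          _ = ∑ c ∈ Fintype.piFinset B, (∏ ℓ, p (c ℓ)) * H (c ℓ0) (s.image c) := by
              rw [hpsum ℓ0, one_mul]

/-- The key induction over blocks. -/
lemma key_blocks (B : ι → Finset E)
    (hBdisj : ∀ ℓ ℓ', ℓ ≠ ℓ' → Disjoint (B ℓ) (B ℓ'))
    (p : E → ℝ) (hp0 : ∀ u, 0 ≤ p u) (hp1 : ∀ u, p u ≤ 1)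
    (hpsum : ∀ ℓ, ∑ u ∈ B ℓ, p u = 1) (s : Finset ι) :
    ∀ f : Finset E → ℝ, SubmodularFn f →
      ∑ X ∈ (s.biUnion B).powerset,
          ((∏ u ∈ X, p u) * ∏ u ∈ s.biUnion B \ X, (1 - p u)) * f X
        ≤ ∑ c ∈ Fintype.piFinset B, (∏ ℓ, p (c ℓ)) * f (s.image c) := by
  induction s using Finset.induction_on with
  | empty =>
    intro f _
    have hone : ∑ c ∈ Fintype.piFinset B, (∏ ℓ, p (c ℓ)) = 1 := by
      rw [← Finset.prod_univ_sum]
      simp [hpsum]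
    rw [Finset.biUnion_empty, Finset.powerset_empty, Finset.sum_singleton]
    simp only [Finset.image_empty]
    rw [← Finset.sum_mul, hone, one_mul]
    simp
  | @insert ℓ0 s hℓ0 ih =>
    intro f hsub
    have hAD : Disjoint (B ℓ0) (s.biUnion B) := by
      rw [Finset.disjoint_biUnion_right]
      exact fun ℓ hℓ => hBdisj ℓ0 ℓ (fun h => hℓ0 (h ▸ hℓ))
    set G : Finset E → ℝ := fun T =>
      ∑ X ∈ (s.biUnion B).powerset,
        ((∏ u ∈ X, p u) * ∏ u ∈ s.biUnion B \ X, (1 - p u)) * f (T ∪ X) with hG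
    have hGsub : SubmodularFn G := by
      intro T T' hTT' u hu
      have hterm : ∀ X : Finset E,
          ((∏ v ∈ X, p v) * ∏ v ∈ s.biUnion B \ X, (1 - p v)) * f (insert u T' ∪ X)
            - ((∏ v ∈ X, p v) * ∏ v ∈ s.biUnion B \ X, (1 - p v)) * f (T' ∪ X)
          ≤ ((∏ v ∈ X, p v) * ∏ v ∈ s.biUnion B \ X, (1 - p v)) * f (insert u T ∪ X)
            - ((∏ v ∈ X, p v) * ∏ v ∈ s.biUnion B \ X, (1 - p v)) * f (T ∪ X) := by
        intro X
        rw [← mul_sub, ← mul_sub]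
        refine mul_le_mul_of_nonneg_left ?_
          (mul_nonneg (prod_nonneg fun v _ => hp0 v)
            (prod_nonneg fun v _ => by linarith [hp1 v]))
        rw [Finset.insert_union, Finset.insert_union]
        by_cases huX : u ∈ X
        · rw [Finset.insert_eq_self.2 (Finset.mem_union_right _ huX),
            Finset.insert_eq_self.2 (Finset.mem_union_right _ huX)]
          simp
        · exact hsub (Finset.union_subset_union_left hTT') u
            (by simp [Finset.mem_union, hu, huX])
      simp only [hG]
      rw [← Finset.sum_sub_distrib, ← Finset.sum_sub_distrib]
      exact Finset.sum_le_sum fun X _ => hterm X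
    calc ∑ X ∈ ((insert ℓ0 s).biUnion B).powerset,
          ((∏ u ∈ X, p u) * ∏ u ∈ (insert ℓ0 s).biUnion B \ X, (1 - p u)) * f X
        = ∑ T ∈ (B ℓ0).powerset,
            ((∏ u ∈ T, p u) * ∏ u ∈ B ℓ0 \ T, (1 - p u)) * G T := by
          rw [Finset.biUnion_insert, sum_powerset_union_disjoint hAD]
          refine Finset.sum_congr rfl fun T hT => ?_
          have hTA := mem_powerset.1 hT
          simp only [hG]
          rw [Finset.mul_sum]
          refine Finset.sum_congr rfl fun X hX => ?_
          have hXD := mem_powerset.1 hX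
          have hdTX : Disjoint T X := hAD.mono hTA hXD
          have hsd : (B ℓ0 ∪ s.biUnion B) \ (T ∪ X)
              = (B ℓ0 \ T) ∪ (s.biUnion B \ X) := by
            ext v
            simp only [mem_sdiff, mem_union]
            have h1 : v ∈ T → v ∈ B ℓ0 := fun h => hTA h
            have h2 : v ∈ X → v ∈ s.biUnion B := fun h => hXD h
            have h3 : v ∈ B ℓ0 → v ∉ s.biUnion B := fun h => disjoint_left.1 hAD h
            tauto
          rw [Finset.prod_union hdTX, hsd,
            Finset.prod_union (hAD.mono sdiff_subset sdiff_subset)]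
          ring
      _ ≤ ∑ u ∈ B ℓ0, p u * G {u} :=
          single_block p hp0 hp1 (B ℓ0) (hpsum ℓ0) G hGsub
      _ ≤ ∑ u ∈ B ℓ0, p u * ∑ c ∈ Fintype.piFinset B,
            (∏ ℓ, p (c ℓ)) * f (insert u (s.image c)) := by
          refine Finset.sum_le_sum fun u _ => mul_le_mul_of_nonneg_left ?_ (hp0 u)
          have hfu : SubmodularFn (fun X => f (insert u X)) := by
            intro X Y hXY v hv
            by_cases hvu : v = u
            · subst hvu
              simp [Finset.insert_idem]
            · show f (insert u (insert v Y)) - f (insert u Y)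
                  ≤ f (insert u (insert v X)) - f (insert u X)
              rw [Finset.insert_comm u v Y, Finset.insert_comm u v X]
              exact hsub (Finset.insert_subset_insert u hXY) v
                (by simp [Finset.mem_insert, hvu, hv])
          have hIH := ih (fun X => f (insert u X)) hfu
          simp only [hG]
          refine le_trans (le_of_eq ?_) hIH
          refine Finset.sum_congr rfl fun X _ => ?_
          rw [← Finset.insert_eq]
      _ = ∑ c ∈ Fintype.piFinset B, (∏ ℓ, p (c ℓ)) * f ((insert ℓ0 s).image c) := by
          rw [marg_coord B p hpsum ℓ0 s hℓ0 (fun u Y => f (insert u Y))]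
          exact Finset.sum_congr rfl fun c _ => by rw [Finset.image_insert]

end Main

/-- Let `E` be a finite set partitioned into disjoint nonempty blocks
`B ℓ`, `ℓ : ι`, with probabilities `p u` summing to `1` inside each block.  Let `π` be the
distribution that, independently for each block, includes exactly one element of the block
chosen according to `p` (i.e. the pushforward under `c ↦ image c univ` of the product of the
block distributions), and let `π̂` include each `u ∈ E` independently with probability `p u`.
Then for every nonnegative monotone submodular `f`, `E_{X∼π}[f X] ≥ E_{X∼π̂}[f X]`. -/
theorem expectation_one_per_block_ge_independent
    {E ι : Type*} [Fintype E] [DecidableEq E] [Fintype ι] [DecidableEq ι]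
    (B : ι → Finset E)
    (hBne : ∀ ℓ, (B ℓ).Nonempty)
    (hBdisj : ∀ ℓ ℓ', ℓ ≠ ℓ' → Disjoint (B ℓ) (B ℓ'))
    (hBcover : ∀ u : E, ∃ ℓ, u ∈ B ℓ)
    (p : E → ℝ) (hp0 : ∀ u, 0 ≤ p u) (hp1 : ∀ u, p u ≤ 1)
    (hpsum : ∀ ℓ, ∑ u ∈ B ℓ, p u = 1)
    (f : Finset E → ℝ) (hf0 : ∀ X, 0 ≤ f X)
    (hmono : MonotoneFn f) (hsub : SubmodularFn f) :
    ∑ X : Finset E, f X * (∏ u ∈ X, p u) * ∏ u ∈ Xᶜ, (1 - p u)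
      ≤ ∑ c ∈ Fintype.piFinset B, (∏ ℓ, p (c ℓ)) * f (Finset.univ.image c) := by
  have huniv : (Finset.univ : Finset ι).biUnion B = Finset.univ := by
    ext u
    simp only [Finset.mem_biUnion, Finset.mem_univ, true_and, iff_true]
    exact hBcover u
  have h := key_blocks B hBdisj p hp0 hp1 hpsum Finset.univ f hsub
  rw [huniv, Finset.powerset_univ] at h
  refine le_trans (le_of_eq ?_) h
  refine Finset.sum_congr rfl fun X _ => ?_
  rw [Finset.compl_eq_univ_sdiff]
  ring
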